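/- Let F be a finite field of order q^2 and let Q, R be disjoint finite subsets of the nonzero elements of the algebraic closure of F, each closed under the map π(x) = x^{−q}. Then S = Σ_{(u,v) ∈ Q×R} uv/(u−v)^2 lies in the subfield of order q. -/

import Mathlib

lemma pi_image {K : Type*} [Field K] [DecidableEq K] (q : ℕ) (Q : Finset K)
    (hinj : Function.Injective (fun x : K => x ^ q))
    (hQ : ∀ u ∈ Q, (u ^ q)⁻¹ ∈ Q) :
    Q.image (fun u => (u ^ q)⁻¹) = Q := by
  apply Finset.eq_of_subset_of_card_le
  · intro x hx
    simp only [Finset.mem_image] at hx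
    obtain ⟨u, hu, rfl⟩ := hx
    exact hQ u hu
  · rw [Finset.card_image_of_injective _ (fun a b hab => hinj (by
      simpa using congrArg (·⁻¹) hab))]

lemma inv_term {K : Type*} [Field K] (a b : K) (ha : a ≠ 0) (hb : b ≠ 0) (hab : a ≠ b) :
    a⁻¹ * b⁻¹ / (a⁻¹ - b⁻¹) ^ 2 = a * b / (a - b) ^ 2 := by
  have h1 : a - b ≠ 0 := sub_ne_zero.mpr hab
  have h2 : b - a ≠ 0 := sub_ne_zero.mpr (Ne.symm hab)
  rw [inv_sub_inv ha hb, div_pow, div_div_eq_mul_div]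
  field_simp
  ring

/-- If `Q` and `R` are disjoint finite subsets of the nonzero algebraic closure of `F`
(of order `q^2`), each closed under `π(x) = x^{-q}`, then
`S = Σ_{(u,v)∈Q×R} uv/(u-v)^2` satisfies `S^q = S`, i.e. lies in the subfield of order `q`. -/
theorem stmt8 (q : ℕ) (hq : IsPrimePow q) (F : Type) [Field F] [Fintype F]
    (hF : Fintype.card F = q ^ 2) (Q R : Finset (AlgebraicClosure F))
    (h0Q : (0 : AlgebraicClosure F) ∉ Q) (h0R : (0 : AlgebraicClosure F) ∉ R)
    (hdisj : Disjoint Q R)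
    (hQ : ∀ u ∈ Q, (u ^ q)⁻¹ ∈ Q) (hR : ∀ u ∈ R, (u ^ q)⁻¹ ∈ R) :
    (∑ u ∈ Q, ∑ v ∈ R, u * v / (u - v) ^ 2) ^ q
      = ∑ u ∈ Q, ∑ v ∈ R, u * v / (u - v) ^ 2 := by
  classical
  obtain ⟨p, k, hp, hk, rfl⟩ := hq
  have hpprime : p.Prime := hp.nat_prime
  haveI : Fact p.Prime := ⟨hpprime⟩
  -- characteristic of F is p
  have hcharF : CharP F p := by
    haveI : CharP F (ringChar F) := ringChar.charP F
    obtain ⟨n, hp', hcard⟩ := FiniteField.card F (ringChar F)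
    have hdvd : ringChar F ∣ p ^ (k * 2) := by
      rw [pow_mul, ← hF, hcard]
      exact dvd_pow_self _ n.pos.ne'
    have : ringChar F = p :=
      (Nat.prime_dvd_prime_iff_eq hp' hpprime).mp (hp'.dvd_of_dvd_pow hdvd)
    exact this ▸ ringChar.charP F
  haveI := hcharF
  haveI : CharP (AlgebraicClosure F) p := charP_of_injective_algebraMap (algebraMap F (AlgebraicClosure F)).injective p
  haveI : ExpChar (AlgebraicClosure F) p := ExpChar.prime hpprime
  set φ : AlgebraicClosure F →+* AlgebraicClosure F := iterateFrobenius (AlgebraicClosure F) p k with hφ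
  have hφapp : ∀ x : AlgebraicClosure F, φ x = x ^ p ^ k := fun x => rfl
  have hφinj : Function.Injective φ := φ.injective
  have hpowinj : Function.Injective (fun x : AlgebraicClosure F => x ^ p ^ k) := by
    intro a b h; exact hφinj (by rw [hφapp, hφapp]; exact h)
  -- rewrite RHS using images
  rw [← hφapp (∑ u ∈ Q, ∑ v ∈ R, u * v / (u - v) ^ 2), map_sum]
  have hinv : ∀ a b : AlgebraicClosure F,
      (fun u => (u ^ p ^ k)⁻¹) a = (fun u => (u ^ p ^ k)⁻¹) b → a = b := by
    intro a b hab
    exact hpowinj (by simpa using congrArg (·⁻¹) hab)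
  conv_rhs => rw [← pi_image (p ^ k) Q hpowinj hQ]
  rw [Finset.sum_image (fun a _ b _ hab => hinv a b hab)]
  refine Finset.sum_congr rfl fun u hu => ?_
  rw [map_sum]
  conv_rhs => rw [← pi_image (p ^ k) R hpowinj hR]
  rw [Finset.sum_image (fun a _ b _ hab => hinv a b hab)]
  refine Finset.sum_congr rfl fun v hv => ?_
  have hu0 : u ≠ 0 := fun h => h0Q (h ▸ hu)
  have hv0 : v ≠ 0 := fun h => h0R (h ▸ hv)
  have huv : u ≠ v := fun h => (Finset.disjoint_left.mp hdisj hu) (h ▸ hv)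
  have ha0 : u ^ p ^ k ≠ 0 := pow_ne_zero _ hu0
  have hb0 : v ^ p ^ k ≠ 0 := pow_ne_zero _ hv0
  have hab : u ^ p ^ k ≠ v ^ p ^ k := fun h => huv (hpowinj h)
  rw [map_div₀, map_mul, map_pow, map_sub, hφapp, hφapp]
  exact (inv_term (u ^ p ^ k) (v ^ p ^ k) ha0 hb0 hab).symm
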